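/- Suppose u : ℝⁿ → ℝ is semiconcave with linear modulus and constant C, v : ℝⁿ → ℝ is semiconvex with the same constant C, u ≥ v everywhere, and let A = {x : u(x) = v(x)}. Then u and v are differentiable at every point of A with Du(x) = Dv(x) for all x ∈ A. -/

import Mathlib

open InnerProductSpace Asymptotics

local notation "⟪" x ", " y "⟫" => @inner ℝ _ _ x y

variable {E : Type*} [NormedAddCommGroup E] [InnerProductSpace ℝ E]

lemma norm_combo_sq (x y : E) (l : ℝ) :
    ‖l • x + (1 - l) • y‖ ^ 2
      = l * ‖x‖ ^ 2 + (1 - l) * ‖y‖ ^ 2 - l * (1 - l) * ‖x - y‖ ^ 2 := by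
  simp only [← real_inner_self_eq_norm_sq, inner_add_left, inner_add_right, inner_sub_left,
    inner_sub_right, real_inner_smul_left, real_inner_smul_right]
  rw [real_inner_comm y x]
  ring

lemma exists_subgradient [FiniteDimensional ℝ E] {f : E → ℝ}
    (hf : ConvexOn ℝ Set.univ f) (x₀ : E) :
    ∃ p : E, ∀ y, f x₀ + ⟪p, y - x₀⟫ ≤ f y := by
  have hcont : Continuous f := continuousOn_univ.mp (hf.continuousOn isOpen_univ)
  set S : Set (E × ℝ) := {q | f q.1 < q.2} with hS
  have hSopen : IsOpen S := isOpen_lt (hcont.comp continuous_fst) continuous_snd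
  have hSconv : Convex ℝ S := by
    rintro ⟨x1, t1⟩ h1 ⟨x2, t2⟩ h2 a b ha hb hab
    simp only [hS, Set.mem_setOf_eq] at *
    have hfle : f (a • x1 + b • x2) ≤ a * f x1 + b * f x2 :=
      hf.2 (Set.mem_univ _) (Set.mem_univ _) ha hb hab
    have : a * f x1 + b * f x2 < a * t1 + b * t2 := by
      rcases eq_or_lt_of_le ha with ha0 | ha0
      · simp only [← ha0, zero_mul, zero_add] at *
        have hb1 : b = 1 := by linarith
        simpa [hb1] using h2
      · rcases eq_or_lt_of_le hb with hb0 | hb0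
        · simp only [← hb0, zero_mul, add_zero] at *
          nlinarith
        · nlinarith
    exact lt_of_le_of_lt hfle this
  have hx₀ : ((x₀, f x₀) : E × ℝ) ∉ S := by simp [hS]
  obtain ⟨L, hL⟩ := geometric_hahn_banach_point_open hSconv hSopen hx₀
  set c : ℝ := L (0, 1) with hc
  have hLsplit : ∀ (y : E) (t : ℝ), L (y, t) = L (y, 0) + t * c := by
    intro y t
    have : (y, t) = (y, (0:ℝ)) + t • ((0:E), (1:ℝ)) := by simp
    rw [this, map_add, map_smul]; simp [hc, smul_eq_mul]
  have hcpos : 0 < c := by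
    have := hL (x₀, f x₀ + 1) (by simp [hS])
    rw [hLsplit x₀ (f x₀ + 1), hLsplit x₀ (f x₀)] at this
    nlinarith
  have key : ∀ y : E, L (x₀, f x₀) ≤ L (y, 0) + f y * c := by
    intro y
    by_contra h
    push_neg at h
    set ε : ℝ := (L (x₀, f x₀) - (L (y, 0) + f y * c)) / c with hε
    have hεpos : 0 < ε := div_pos (by linarith) hcpos
    have h2 := hL (y, f y + ε / 2) (by simp [hS]; linarith)
    rw [hLsplit y (f y + ε / 2)] at h2
    have : ε * c = L (x₀, f x₀) - (L (y, 0) + f y * c) := by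
      rw [hε, div_mul_cancel₀ _ (ne_of_gt hcpos)]
    nlinarith
  refine ⟨(toDual ℝ E).symm (-(c⁻¹) • (L.comp (ContinuousLinearMap.inl ℝ E ℝ))), fun y => ?_⟩
  rw [toDual_symm_apply]
  have h1 := key y
  rw [hLsplit x₀ (f x₀)] at h1
  have h2 : L ((y - x₀ : E), (0:ℝ)) = L (y, 0) - L (x₀, 0) := by
    have : ((y - x₀ : E), (0:ℝ)) = (y, (0:ℝ)) - (x₀, 0) := by simp
    rw [this, map_sub]
  simp only [ContinuousLinearMap.smul_apply, ContinuousLinearMap.comp_apply,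
    ContinuousLinearMap.inl_apply, smul_eq_mul]
  rw [h2]
  have hcne : c ≠ 0 := ne_of_gt hcpos
  have hinv : (0:ℝ) < c⁻¹ := inv_pos.2 hcpos
  have hcc : c * c⁻¹ = 1 := mul_inv_cancel₀ hcne
  have h3 : (f x₀ - f y) * c ≤ L (y, 0) - L (x₀, 0) := by linarith
  have h4 := mul_le_mul_of_nonneg_left h3 hinv.le
  rw [show c⁻¹ * ((f x₀ - f y) * c) = (f x₀ - f y) * (c * c⁻¹) from by ring, hcc, mul_one] at h4
  linarith

lemma hasGradientAt_of_squeeze [CompleteSpace E] {f : E → ℝ} {p x₀ : E} {K : ℝ}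
    (h : ∀ y, |f y - f x₀ - ⟪p, y - x₀⟫| ≤ K * ‖y - x₀‖ ^ 2) : HasGradientAt f p x₀ := by
  rw [hasGradientAt_iff_hasFDerivAt, hasFDerivAt_iff_isLittleO]
  have h1 : (fun y => f y - f x₀ - (toDual ℝ E p) (y - x₀)) =O[nhds x₀]
      fun y => ‖y - x₀‖ ^ 2 := by
    refine IsBigO.of_bound K (Filter.Eventually.of_forall fun y => ?_)
    have := h y
    simpa [toDual_apply_apply, Real.norm_eq_abs, abs_of_nonneg (sq_nonneg ‖y - x₀‖)] using this
  have h2 : (fun y : E => ‖y - x₀‖ ^ 2) =o[nhds x₀] fun y => y - x₀ := by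
    rw [isLittleO_iff]
    intro c hc
    have ht : Filter.Tendsto (fun y : E => ‖y - x₀‖) (nhds x₀) (nhds 0) := by
      have : Filter.Tendsto (fun y : E => y - x₀) (nhds x₀) (nhds (x₀ - x₀)) :=
        (continuous_id.sub continuous_const).tendsto x₀
      simpa using this.norm
    filter_upwards [ht.eventually (gt_mem_nhds hc)] with y hy
    have h0 : (0:ℝ) ≤ ‖y - x₀‖ := norm_nonneg _
    simp only [Real.norm_eq_abs, abs_of_nonneg (sq_nonneg ‖y - x₀‖), norm_norm]
    nlinarith
  exact h1.trans_isLittleO h2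

/-- `u` is semiconcave with linear modulus and constant `C` on `ℝⁿ`. -/
def Semiconcave {n : ℕ} (C : ℝ) (u : EuclideanSpace ℝ (Fin n) → ℝ) : Prop :=
  ∀ x y : EuclideanSpace ℝ (Fin n), ∀ lam ∈ Set.Icc (0:ℝ) 1,
    lam * u x + (1 - lam) * u y - u (lam • x + (1 - lam) • y) ≤
      C / 2 * lam * (1 - lam) * ‖x - y‖ ^ 2

lemma semiconcave_supergrad {n : ℕ} {C : ℝ} {u : EuclideanSpace ℝ (Fin n) → ℝ}
    (hu : Semiconcave C u) (x₀ : EuclideanSpace ℝ (Fin n)) :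
    ∃ p, ∀ y, u y ≤ u x₀ + ⟪p, y - x₀⟫ + C / 2 * ‖y - x₀‖ ^ 2 := by
  have hconv : ConvexOn ℝ Set.univ (fun x : EuclideanSpace ℝ (Fin n) =>
      C / 2 * ‖x‖ ^ 2 - u x) := by
    refine ⟨convex_univ, fun x _ y _ a b ha hb hab => ?_⟩
    have hb' : b = 1 - a := by linarith
    subst hb'
    have h1 := hu x y a ⟨ha, by linarith⟩
    have h2 := norm_combo_sq x y a
    simp only [smul_eq_mul]
    rw [h2]
    have h3 : C / 2 * (a * ‖x‖ ^ 2 + (1 - a) * ‖y‖ ^ 2 - a * (1 - a) * ‖x - y‖ ^ 2)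
        = a * (C / 2 * ‖x‖ ^ 2) + (1 - a) * (C / 2 * ‖y‖ ^ 2)
          - C / 2 * a * (1 - a) * ‖x - y‖ ^ 2 := by ring
    rw [h3]
    ring_nf
    ring_nf at h1
    linarith
  obtain ⟨q, hq⟩ := exists_subgradient hconv x₀
  refine ⟨C • x₀ - q, fun y => ?_⟩
  have h := hq y
  have h0 := norm_add_sq_real x₀ (y - x₀)
  rw [show x₀ + (y - x₀) = y from by abel] at h0
  have h0' : C / 2 * ‖y‖ ^ 2
      = C / 2 * ‖x₀‖ ^ 2 + C * ⟪x₀, y - x₀⟫ + C / 2 * ‖y - x₀‖ ^ 2 := by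
    rw [h0]; ring
  have hinner : ⟪C • x₀ - q, y - x₀⟫ = C * ⟪x₀, y - x₀⟫ - ⟪q, y - x₀⟫ := by
    rw [inner_sub_left, real_inner_smul_left]
  rw [hinner]
  linarith

theorem stmt1 {n : ℕ} (C : ℝ) (u v : EuclideanSpace ℝ (Fin n) → ℝ)
    (hu : Semiconcave C u) (hv : Semiconcave C (fun x => -v x))
    (huv : ∀ x, v x ≤ u x) (A : Set (EuclideanSpace ℝ (Fin n)))
    (hA : A = {x | u x = v x}) :
    ∀ x ∈ A, DifferentiableAt ℝ u x ∧ DifferentiableAt ℝ v x ∧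
      gradient u x = gradient v x := by
  intro x hx
  rw [hA] at hx
  have hux : u x = v x := hx
  obtain ⟨p, hp⟩ := semiconcave_supergrad hu x
  obtain ⟨q', hq'⟩ := semiconcave_supergrad hv x
  have hq : ∀ y, v x + ⟪-q', y - x⟫ - C / 2 * ‖y - x‖ ^ 2 ≤ v y := by
    intro y
    have := hq' y
    rw [inner_neg_left]
    linarith
  -- the two (sub/super) gradients agree
  have hd : ∀ h : EuclideanSpace ℝ (Fin n), ⟪-q' - p, h⟫ ≤ C * ‖h‖ ^ 2 := by
    intro h
    have h1 := hp (x + h)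
    have h2 := hq (x + h)
    have h3 := huv (x + h)
    rw [add_sub_cancel_left] at h1 h2
    rw [inner_sub_left]
    linarith
  have hdeq : -q' = p := by
    by_contra hne
    have hdne : -q' - p ≠ 0 := sub_ne_zero.2 hne
    have hdpos : 0 < ‖-q' - p‖ := norm_pos_iff.2 hdne
    set t : ℝ := (|C| + 1)⁻¹ with ht
    have habs : (0:ℝ) < |C| + 1 := by positivity
    have htpos : 0 < t := inv_pos.2 habs
    have htc : t * (|C| + 1) = 1 := inv_mul_cancel₀ (ne_of_gt habs)
    have hkey := hd (t • (-q' - p))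
    rw [real_inner_smul_right, real_inner_self_eq_norm_sq, norm_smul,
      Real.norm_eq_abs, abs_of_pos htpos] at hkey
    have hC : C ≤ |C| := le_abs_self C
    nlinarith [sq_nonneg ‖-q' - p‖, mul_pos htpos (mul_pos hdpos hdpos),
      mul_pos (mul_pos htpos htpos) (mul_pos hdpos hdpos)]
  have hsqueeze_u : ∀ y, |u y - u x - ⟪p, y - x⟫| ≤ |C| * ‖y - x‖ ^ 2 := by
    intro y
    have h1 := hp y
    have h2 := hq y
    have h3 := huv y
    rw [hdeq] at h2
    have hC : C ≤ |C| := le_abs_self C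
    have hC' : -|C| ≤ C := neg_abs_le C
    have hn : (0:ℝ) ≤ ‖y - x‖ ^ 2 := sq_nonneg _
    rw [abs_le]
    constructor <;> nlinarith
  have hsqueeze_v : ∀ y, |v y - v x - ⟪p, y - x⟫| ≤ |C| * ‖y - x‖ ^ 2 := by
    intro y
    have h1 := hp y
    have h2 := hq y
    have h3 := huv y
    rw [hdeq] at h2
    have hC : C ≤ |C| := le_abs_self C
    have hC' : -|C| ≤ C := neg_abs_le C
    have hn : (0:ℝ) ≤ ‖y - x‖ ^ 2 := sq_nonneg _
    rw [abs_le]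
    constructor <;> nlinarith
  have hugrad : HasGradientAt u p x := hasGradientAt_of_squeeze hsqueeze_u
  have hvgrad : HasGradientAt v p x := hasGradientAt_of_squeeze hsqueeze_v
  exact ⟨hugrad.differentiableAt, hvgrad.differentiableAt,
    by rw [hugrad.gradient, hvgrad.gradient]⟩
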